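/- Let t ≥ k ≥ 1, let V be a finite set with |V| ≥ 2t, and let G ∈ ℳ_t(V). Then λ_1(L(F_k(G))) = 2k; equivalently, λ_1(L(F_k(G))) − |E| = 2k − t. -/

import Mathlib

open Finset
open scoped symmDiff

/-- The `k`-th token graph of `G`: its vertices are the `k`-element subsets of the
vertex set of `G`, two of them being adjacent whenever their symmetric difference
is an edge of `G`. -/
def tokenGraph {V : Type*} [DecidableEq V] (G : SimpleGraph V) (k : ℕ) :
    SimpleGraph {s : Finset V // s.card = k} where
  Adj σ τ := ∃ u v, G.Adj u v ∧ σ.val ∆ τ.val = {u, v}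
  symm := by
    constructor
    rintro σ τ ⟨u, v, huv, hd⟩
    exact ⟨u, v, huv, by rwa [symmDiff_comm]⟩
  loopless := by
    constructor
    rintro σ ⟨u, v, huv, hd⟩
    rw [symmDiff_self] at hd
    have hu : u ∈ ({u, v} : Finset V) := by simp
    rw [← hd] at hu
    simp at hu

instance {V : Type*} [Fintype V] [DecidableEq V] (G : SimpleGraph V) [DecidableRel G.Adj]
    (k : ℕ) : DecidableRel (tokenGraph G k).Adj := fun σ τ =>
  inferInstanceAs (Decidable (∃ u v, G.Adj u v ∧ σ.val ∆ τ.val = {u, v}))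

/-- The largest eigenvalue of a (symmetric) real matrix, expressed as the supremum
of the set of its real eigenvalues. -/
noncomputable def maxEigenvalue {n : Type*} [Fintype n] (M : Matrix n n ℝ) : ℝ :=
  sSup {μ : ℝ | ∃ x : n → ℝ, x ≠ 0 ∧ M.mulVec x = μ • x}

private lemma tg_adj {V : Type*} [DecidableEq V] {G : SimpleGraph V} {k : ℕ}
    {σ τ : {s : Finset V // s.card = k}} :
    (tokenGraph G k).Adj σ τ ↔ ∃ a b, G.Adj a b ∧ σ.val ∆ τ.val = {a, b} := Iff.rfl

private lemma card_symmDiff_pair {V : Type*} [DecidableEq V] {σ : Finset V} {a b : V}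
    (ha : a ∈ σ) (hb : b ∉ σ) (hab : a ≠ b) : (σ ∆ ({a, b} : Finset V)).card = σ.card := by
  have h1 : σ ∆ ({a, b} : Finset V) = insert b (σ.erase a) := by
    ext x
    simp only [Finset.mem_symmDiff, Finset.mem_insert, Finset.mem_singleton, Finset.mem_erase]
    rcases eq_or_ne x a with rfl | hxa <;> rcases eq_or_ne x b with rfl | hxb <;> simp_all
  rw [h1, Finset.card_insert_of_notMem (fun h => hb (Finset.mem_of_mem_erase h)),
    Finset.card_erase_of_mem ha]
  have : 0 < σ.card := Finset.card_pos.mpr ⟨a, ha⟩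
  omega

/-- For two sets of equal cardinality whose symmetric difference is `{a,b}`,
exactly one of `a, b` lies in each set. -/
private lemma one_each {V : Type*} [DecidableEq V] {σ τ : Finset V}
    (hc : σ.card = τ.card) {a b : V} (hab : a ≠ b) (h : σ ∆ τ = {a, b}) :
    (a ∈ σ ∧ a ∉ τ ∧ b ∈ τ ∧ b ∉ σ) ∨ (b ∈ σ ∧ b ∉ τ ∧ a ∈ τ ∧ a ∉ σ) := by
  have hne : σ ≠ τ := by
    intro he
    rw [he, symmDiff_self] at h
    have : a ∈ ({a, b} : Finset V) := by simp
    rw [← h] at this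
    simp at this
  have ha : a ∈ σ ∆ τ := by rw [h]; simp
  have hb : b ∈ σ ∆ τ := by rw [h]; simp
  rw [Finset.mem_symmDiff] at ha hb
  -- rule out that both are on the same side
  have key : ∀ x ∈ τ, x ∉ σ → x = a ∨ x = b := by
    intro x hx hxs
    have : x ∈ σ ∆ τ := Finset.mem_symmDiff.mpr (Or.inr ⟨hx, hxs⟩)
    rw [h] at this; simpa using this
  have key' : ∀ x ∈ σ, x ∉ τ → x = a ∨ x = b := by
    intro x hx hxs
    have : x ∈ σ ∆ τ := Finset.mem_symmDiff.mpr (Or.inl ⟨hx, hxs⟩)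
    rw [h] at this; simpa using this
  rcases ha with ⟨ha1, ha2⟩ | ⟨ha1, ha2⟩ <;> rcases hb with ⟨hb1, hb2⟩ | ⟨hb1, hb2⟩
  · -- both in σ \ τ : then τ ⊆ σ, so τ = σ, contradiction
    exfalso
    have hsub : τ ⊆ σ := by
      intro x hx
      by_contra hxs
      rcases key x hx hxs with rfl | rfl
      exacts [ha2 hx, hb2 hx]
    exact hne ((Finset.eq_of_subset_of_card_le hsub (le_of_eq hc)).symm)
  · exact Or.inl ⟨ha1, ha2, hb1, hb2⟩
  · exact Or.inr ⟨hb1, hb2, ha1, ha2⟩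
  · exfalso
    have hsub : σ ⊆ τ := by
      intro x hx
      by_contra hxs
      rcases key' x hx hxs with rfl | rfl
      exacts [ha2 hx, hb2 hx]
    exact hne (Finset.eq_of_subset_of_card_le hsub (le_of_eq hc.symm))

theorem stmt_17 {V : Type*} [Fintype V] [DecidableEq V] (t k : ℕ) (hk1 : 1 ≤ k)
    (hkt : k ≤ t) (hV : 2 * t ≤ Fintype.card V)
    (G : SimpleGraph V) [DecidableRel G.Adj]
    (hcard : G.edgeFinset.card = t)
    (hdisj : ∀ e₁ ∈ G.edgeFinset, ∀ e₂ ∈ G.edgeFinset, e₁ ≠ e₂ →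
      ∀ v : V, ¬(v ∈ e₁ ∧ v ∈ e₂)) :
    maxEigenvalue ((tokenGraph G k).lapMatrix ℝ) = 2 * (k : ℝ) := by
  classical
  set H := tokenGraph G k with hH
  have hVpos : 0 < Fintype.card V := by omega
  haveI : Nonempty V := Fintype.card_pos_iff.mp hVpos
  -- matching helpers
  have hsame : ∀ e₁ ∈ G.edgeFinset, ∀ e₂ ∈ G.edgeFinset, ∀ a : V,
      a ∈ e₁ → a ∈ e₂ → e₁ = e₂ := by
    intro e₁ h₁ e₂ h₂ a ha₁ ha₂
    by_contra hne
    exact hdisj e₁ h₁ e₂ h₂ hne a ⟨ha₁, ha₂⟩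
  have huniq : ∀ {a b c : V}, G.Adj a b → G.Adj a c → b = c := by
    intro a b c hab hac
    have h1 : s(a, b) ∈ G.edgeFinset := SimpleGraph.mem_edgeFinset.mpr (G.mem_edgeSet.mpr hab)
    have h2 : s(a, c) ∈ G.edgeFinset := SimpleGraph.mem_edgeFinset.mpr (G.mem_edgeSet.mpr hac)
    have := hsame _ h1 _ h2 a (by simp) (by simp)
    exact Sym2.congr_right.mp this
  -- normalized adjacency in the token graph
  have hone_each : ∀ σ τ : {s : Finset V // s.card = k}, H.Adj σ τ →
      ∃ c d, G.Adj c d ∧ σ.val ∆ τ.val = {c, d} ∧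
        c ∈ σ.val ∧ c ∉ τ.val ∧ d ∈ τ.val ∧ d ∉ σ.val := by
    intro σ τ hadj
    obtain ⟨a, b, hab, hsd⟩ := tg_adj.mp hadj
    have hc : σ.val.card = τ.val.card := σ.2.trans τ.2.symm
    rcases one_each hc hab.ne hsd with ⟨h1, h2, h3, h4⟩ | ⟨h1, h2, h3, h4⟩
    · exact ⟨a, b, hab, hsd, h1, h2, h3, h4⟩
    · exact ⟨b, a, hab.symm, by rwa [Finset.pair_comm], h1, h2, h3, h4⟩
  -- from adjacency, σ.val \ τ.val is the singleton on the "σ-side" vertex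
  have hsdiff : ∀ σ τ : {s : Finset V // s.card = k}, ∀ c d : V,
      σ.val ∆ τ.val = {c, d} → c ∈ σ.val → c ∉ τ.val → d ∉ σ.val →
      σ.val \ τ.val = {c} := by
    intro σ τ c d hsd hc1 hc2 hd
    ext x
    simp only [Finset.mem_sdiff, Finset.mem_singleton]
    constructor
    · intro ⟨hx1, hx2⟩
      have : x ∈ σ.val ∆ τ.val := Finset.mem_symmDiff.mpr (Or.inl ⟨hx1, hx2⟩)
      rw [hsd] at this
      rcases Finset.mem_insert.mp this with rfl | h
      · rfl
      · exact absurd hx1 (by rw [Finset.mem_singleton.mp h]; exact hd)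
    · rintro rfl; exact ⟨hc1, hc2⟩
  -- degree bound: every vertex of the token graph has degree ≤ k
  have hdeg : ∀ σ : {s : Finset V // s.card = k}, H.degree σ ≤ k := by
    intro σ
    show (H.neighborFinset σ).card ≤ k
    refine le_trans ?_ (le_of_eq σ.2)
    set f : {s : Finset V // s.card = k} → V := fun τ =>
      if h : (σ.val \ τ.val).Nonempty then h.choose else Classical.arbitrary V with hf
    have hfspec : ∀ τ : {s : Finset V // s.card = k}, ∀ c : V,
        σ.val \ τ.val = {c} → f τ = c := by
      intro τ c hc
      have hne : (σ.val \ τ.val).Nonempty := by rw [hc]; exact ⟨c, by simp⟩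
      have h2 : hne.choose ∈ ({c} : Finset V) := by rw [← hc]; exact hne.choose_spec
      simp only [hf, dif_pos hne, Finset.mem_singleton.mp h2]
    apply Finset.card_le_card_of_injOn f
    · intro τ hτ
      obtain ⟨c, d, hcd, hsd, h1, h2, h3, h4⟩ :=
        hone_each σ τ ((H.mem_neighborFinset _ _).mp hτ)
      rw [hfspec τ c (hsdiff σ τ c d hsd h1 h2 h4)]
      exact h1
    · intro τ₁ hτ₁ τ₂ hτ₂ hf12
      simp only [Finset.coe_sort_coe, Finset.mem_coe] at hτ₁ hτ₂
      obtain ⟨c₁, d₁, hcd₁, hsd₁, h11, h12, h13, h14⟩ :=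
        hone_each σ τ₁ ((H.mem_neighborFinset _ _).mp hτ₁)
      obtain ⟨c₂, d₂, hcd₂, hsd₂, h21, h22, h23, h24⟩ :=
        hone_each σ τ₂ ((H.mem_neighborFinset _ _).mp hτ₂)
      rw [hfspec τ₁ c₁ (hsdiff σ τ₁ c₁ d₁ hsd₁ h11 h12 h14),
        hfspec τ₂ c₂ (hsdiff σ τ₂ c₂ d₂ hsd₂ h21 h22 h24)] at hf12
      subst hf12
      have hd12 : d₁ = d₂ := huniq hcd₁ hcd₂
      subst hd12
      have : σ.val ∆ τ₁.val = σ.val ∆ τ₂.val := by rw [hsd₁, hsd₂]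
      have hval : τ₁.val = τ₂.val := by
        have e1 := symmDiff_symmDiff_cancel_left σ.val τ₁.val
        have e2 := symmDiff_symmDiff_cancel_left σ.val τ₂.val
        rw [← e1, ← e2, this]
      exact Subtype.ext hval
  -- the upper bound on eigenvalues
  have hub : ∀ μ : ℝ, (∃ x : {s : Finset V // s.card = k} → ℝ,
      x ≠ 0 ∧ (H.lapMatrix ℝ).mulVec x = μ • x) → μ ≤ 2 * (k : ℝ) := by
    rintro μ ⟨x, hx0, hx⟩
    have hne : (Finset.univ : Finset {s : Finset V // s.card = k}).Nonempty := by
      obtain ⟨s₀, -, hs₀⟩ := Finset.exists_subset_card_eq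
        (show k ≤ (Finset.univ : Finset V).card by rw [Finset.card_univ]; omega)
      exact ⟨⟨s₀, hs₀⟩, Finset.mem_univ _⟩
    obtain ⟨j, -, hj⟩ := Finset.exists_max_image Finset.univ (fun i => |x i|) hne
    simp only [Finset.mem_univ, forall_const] at hj
    have hxj : x j ≠ 0 := by
      intro h
      apply hx0
      funext i
      have := hj i
      rw [h, abs_zero] at this
      exact abs_eq_zero.mp (le_antisymm this (abs_nonneg _))
    have hxjpos : 0 < |x j| := abs_pos.mpr hxj
    have heq := congrFun hx j
    rw [SimpleGraph.lapMatrix_mulVec_apply] at heq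
    have heq2 : (μ - H.degree j) * x j = -∑ u ∈ H.neighborFinset j, x u := by
      have : μ • x j = μ * x j := rfl
      rw [Pi.smul_apply, smul_eq_mul] at heq
      linarith [heq]
    have hbound : |μ - H.degree j| * |x j| ≤ (H.degree j : ℝ) * |x j| := by
      rw [← abs_mul, heq2, abs_neg]
      calc |∑ u ∈ H.neighborFinset j, x u| ≤ ∑ u ∈ H.neighborFinset j, |x u| :=
            Finset.abs_sum_le_sum_abs _ _
        _ ≤ ∑ u ∈ H.neighborFinset j, |x j| := Finset.sum_le_sum fun u _ => hj u
        _ = (H.neighborFinset j).card * |x j| := by rw [Finset.sum_const, nsmul_eq_mul]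
        _ = (H.degree j : ℝ) * |x j| := rfl
    have h1 : |μ - H.degree j| ≤ (H.degree j : ℝ) :=
      le_of_mul_le_mul_right (by exact hbound) hxjpos
    have h2 : μ - H.degree j ≤ (H.degree j : ℝ) := (le_abs_self _).trans h1
    have h3 : (H.degree j : ℝ) ≤ (k : ℝ) := by exact_mod_cast hdeg j
    linarith
  -- construction of an eigenvector with eigenvalue 2k
  obtain ⟨S, hSsub, hScard⟩ := Finset.exists_subset_card_eq
    (show k ≤ G.edgeFinset.card by rw [hcard]; exact hkt)
  set u : Sym2 V → V := fun e => (Quot.out e).1 with hu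
  set w : Sym2 V → V := fun e => (Quot.out e).2 with hw
  have houw : ∀ e : Sym2 V, s(u e, w e) = e := fun e => Quot.out_eq e
  have hmemu : ∀ e : Sym2 V, u e ∈ e := fun e => Sym2.out_fst_mem e
  have hmemw : ∀ e : Sym2 V, w e ∈ e := fun e => Sym2.out_snd_mem e
  have hmem_iff : ∀ (e : Sym2 V) (a : V), a ∈ e ↔ a = u e ∨ a = w e := by
    intro e a
    conv_lhs => rw [← houw e]
    exact Sym2.mem_iff
  have hedge : ∀ e ∈ S, G.Adj (u e) (w e) := by
    intro e he
    have : e ∈ G.edgeSet := SimpleGraph.mem_edgeFinset.mp (hSsub he)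
    rw [← houw e] at this
    exact this
  have hSne : ∀ e ∈ S, u e ≠ w e := fun e he => (hedge e he).ne
  -- transversal predicate, sign, eigenvector
  set Pp : {s : Finset V // s.card = k} → Prop := fun σ =>
    (∀ a ∈ σ.val, ∃ e ∈ S, a ∈ e) ∧ ∀ e ∈ S, (u e ∈ σ.val ↔ w e ∉ σ.val) with hPp
  set sgn : {s : Finset V // s.card = k} → ℝ :=
    fun σ => ∏ e ∈ S, (if u e ∈ σ.val then (1 : ℝ) else -1) with hsgn
  set x : {s : Finset V // s.card = k} → ℝ :=
    fun σ => if Pp σ then sgn σ else 0 with hx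
  -- the swap construction
  have hswap : ∀ (σ : {s : Finset V // s.card = k}) (e : Sym2 V), e ∈ S → Pp σ →
      ∃ τ : {s : Finset V // s.card = k}, τ.val = σ.val ∆ {u e, w e} ∧ Pp τ ∧
        sgn τ = -sgn σ ∧ H.Adj σ τ := by
    intro σ e heS hP
    have hadj := hedge e heS
    have hne := hSne e heS
    have hone := hP.2 e heS
    have hmem : ∀ a : V, a ∈ σ.val ∆ ({u e, w e} : Finset V) ↔
        (a ∈ σ.val ∧ a ≠ u e ∧ a ≠ w e) ∨ (a ∉ σ.val ∧ (a = u e ∨ a = w e)) := by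
      intro a
      simp only [Finset.mem_symmDiff, Finset.mem_insert, Finset.mem_singleton]
      tauto
    have hcards : (σ.val ∆ ({u e, w e} : Finset V)).card = k := by
      rcases Classical.em (u e ∈ σ.val) with h | h
      · have hw' : w e ∉ σ.val := hone.mp h
        rw [card_symmDiff_pair h hw' hne, σ.2]
      · have hw' : w e ∈ σ.val := by
          by_contra hw2
          exact h (hone.mpr hw2)
        rw [Finset.pair_comm, card_symmDiff_pair hw' h (Ne.symm hne), σ.2]
    refine ⟨⟨σ.val ∆ {u e, w e}, hcards⟩, rfl, ⟨?_, ?_⟩, ?_, ?_⟩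
    · -- support condition
      intro a ha
      rcases (hmem a).mp ha with ⟨ha1, -, -⟩ | ⟨-, ha2⟩
      · exact hP.1 a ha1
      · exact ⟨e, heS, (hmem_iff e a).mpr ha2⟩
    · -- one-endpoint condition
      intro e' he'
      rcases Classical.em (e' = e) with rfl | hne'
      · have h1 : u e' ∈ σ.val ∆ ({u e', w e'} : Finset V) ↔ u e' ∉ σ.val := by
          rw [hmem]; simp [hSne e' he']
        have h2 : w e' ∈ σ.val ∆ ({u e', w e'} : Finset V) ↔ w e' ∉ σ.val := by
          rw [hmem]; simp [(hSne e' he').symm]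
        rw [h1, h2]
        tauto
      · have hu' : u e' ≠ u e ∧ u e' ≠ w e := by
          constructor <;> intro hh
          · exact hne' (hsame e' (hSsub he') e (hSsub heS) (u e') (hmemu e') (hh ▸ hmemu e))
          · exact hne' (hsame e' (hSsub he') e (hSsub heS) (u e') (hmemu e') (hh ▸ hmemw e))
        have hw'' : w e' ≠ u e ∧ w e' ≠ w e := by
          constructor <;> intro hh
          · exact hne' (hsame e' (hSsub he') e (hSsub heS) (w e') (hmemw e') (hh ▸ hmemu e))
          · exact hne' (hsame e' (hSsub he') e (hSsub heS) (w e') (hmemw e') (hh ▸ hmemw e))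
        have h1 : u e' ∈ σ.val ∆ ({u e, w e} : Finset V) ↔ u e' ∈ σ.val := by
          rw [hmem]; simp [hu'.1, hu'.2]
        have h2 : w e' ∈ σ.val ∆ ({u e, w e} : Finset V) ↔ w e' ∈ σ.val := by
          rw [hmem]; simp [hw''.1, hw''.2]
        rw [h1, h2]
        exact hP.2 e' he'
    · -- sign flips
      simp only [hsgn]
      rw [← Finset.mul_prod_erase S _ heS, ← Finset.mul_prod_erase S
        (fun e' => if u e' ∈ σ.val then (1 : ℝ) else -1) heS]
      have hrest : ∏ e' ∈ S.erase e, (if u e' ∈ σ.val ∆ ({u e, w e} : Finset V)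
          then (1 : ℝ) else -1) = ∏ e' ∈ S.erase e, (if u e' ∈ σ.val then (1 : ℝ) else -1) := by
        apply Finset.prod_congr rfl
        intro e' he'
        have he'S : e' ∈ S := Finset.mem_of_mem_erase he'
        have hne' : e' ≠ e := Finset.ne_of_mem_erase he'
        have hu' : u e' ≠ u e ∧ u e' ≠ w e := by
          constructor <;> intro hh
          · exact hne' (hsame e' (hSsub he'S) e (hSsub heS) (u e') (hmemu e') (hh ▸ hmemu e))
          · exact hne' (hsame e' (hSsub he'S) e (hSsub heS) (u e') (hmemu e') (hh ▸ hmemw e))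
        have : u e' ∈ σ.val ∆ ({u e, w e} : Finset V) ↔ u e' ∈ σ.val := by
          rw [hmem]; simp [hu'.1, hu'.2]
        simp only [this]
      rw [hrest]
      have hflip : (if u e ∈ σ.val ∆ ({u e, w e} : Finset V) then (1 : ℝ) else -1) =
          -(if u e ∈ σ.val then (1 : ℝ) else -1) := by
        have : u e ∈ σ.val ∆ ({u e, w e} : Finset V) ↔ u e ∉ σ.val := by
          rw [hmem]; simp [hne]
        rcases Classical.em (u e ∈ σ.val) with h | h <;> simp [this, h]
      rw [hflip]
      ring
    · -- adjacency
      exact tg_adj.mpr ⟨u e, w e, hadj, symmDiff_symmDiff_cancel_left σ.val _⟩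
  -- every neighbor of a transversal is a swap
  have hneigh : ∀ σ τ : {s : Finset V // s.card = k}, Pp σ → H.Adj σ τ →
      ∃ e ∈ S, τ.val = σ.val ∆ {u e, w e} := by
    intro σ τ hP hadj
    obtain ⟨c, d, hcd, hsd, h1, h2, h3, h4⟩ := hone_each σ τ hadj
    obtain ⟨e, heS, hce⟩ := hP.1 c h1
    have hpair : ({c, d} : Finset V) = {u e, w e} := by
      rcases (hmem_iff e c).mp hce with rfl | rfl
      · rw [huniq hcd (hedge e heS)]
      · rw [huniq hcd (hedge e heS).symm, Finset.pair_comm]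
    refine ⟨e, heS, ?_⟩
    rw [← hpair, ← hsd, symmDiff_symmDiff_cancel_left]
  -- injectivity of the swap map
  have hinj : ∀ (σ : {s : Finset V // s.card = k}), ∀ e₁ ∈ S, ∀ e₂ ∈ S,
      σ.val ∆ ({u e₁, w e₁} : Finset V) = σ.val ∆ {u e₂, w e₂} → e₁ = e₂ := by
    intro σ e₁ h₁ e₂ h₂ heq
    have hpair : ({u e₁, w e₁} : Finset V) = {u e₂, w e₂} := by
      have t1 := symmDiff_symmDiff_cancel_left σ.val ({u e₁, w e₁} : Finset V)
      have t2 := symmDiff_symmDiff_cancel_left σ.val ({u e₂, w e₂} : Finset V)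
      rw [← t1, ← t2, heq]
    have : u e₁ ∈ ({u e₂, w e₂} : Finset V) := by rw [← hpair]; simp
    have hmem2 : u e₁ ∈ e₂ := by
      rw [hmem_iff]
      simpa using this
    exact hsame e₁ (hSsub h₁) e₂ (hSsub h₂) (u e₁) (hmemu e₁) hmem2
  -- the eigenvector equation
  have heig : (H.lapMatrix ℝ).mulVec x = (2 * (k : ℝ)) • x := by
    funext σ
    rw [SimpleGraph.lapMatrix_mulVec_apply, Pi.smul_apply, smul_eq_mul]
    rcases Classical.em (Pp σ) with hP | hP
    · -- transversal case
      have hxσ : x σ = sgn σ := by rw [hx]; exact if_pos hP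
      have hsb := fun (e : Sym2 V) (he : e ∈ S) => hswap σ e he hP
      have hi : ∀ (e : Sym2 V) (he : e ∈ S), (hsb e he).choose ∈ H.neighborFinset σ :=
        fun e he => (H.mem_neighborFinset _ _).mpr (hsb e he).choose_spec.2.2.2
      have hinj' : ∀ (e₁ : Sym2 V) (h₁ : e₁ ∈ S) (e₂ : Sym2 V) (h₂ : e₂ ∈ S),
          (hsb e₁ h₁).choose = (hsb e₂ h₂).choose → e₁ = e₂ := by
        intro e₁ h₁ e₂ h₂ h
        apply hinj σ e₁ h₁ e₂ h₂
        rw [← (hsb e₁ h₁).choose_spec.1, ← (hsb e₂ h₂).choose_spec.1, h]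
      have hsurj : ∀ τ ∈ H.neighborFinset σ, ∃ e, ∃ (he : e ∈ S), (hsb e he).choose = τ := by
        intro τ hτ
        obtain ⟨e, he, hval⟩ := hneigh σ τ hP ((H.mem_neighborFinset _ _).mp hτ)
        exact ⟨e, he, Subtype.ext (((hsb e he).choose_spec.1).trans hval.symm)⟩
      -- neighbor sum via the swap bijection
      have hsum : ∑ e ∈ S, (-sgn σ) = ∑ τ ∈ H.neighborFinset σ, x τ := by
        apply Finset.sum_bij (fun e he => (hsb e he).choose) hi hinj' hsurj
        intro e he
        have hPτ := (hsb e he).choose_spec.2.1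
        have : x (hsb e he).choose = sgn (hsb e he).choose := by rw [hx]; exact if_pos hPτ
        rw [this, (hsb e he).choose_spec.2.2.1]
      -- degree via the swap bijection
      have hdegσ : H.degree σ = k := by
        have := Finset.card_bij (fun e he => (hsb e he).choose) hi hinj' hsurj
        rw [hScard] at this
        exact this.symm
      rw [hdegσ, hxσ, ← hsum, Finset.sum_const, hScard, nsmul_eq_mul]
      ring
    · -- non-transversal case
      have hxσ : x σ = 0 := by rw [hx]; exact if_neg hP
      have hsum0 : ∑ τ ∈ H.neighborFinset σ, x τ = 0 := by
        apply Finset.sum_eq_zero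
        intro τ hτ
        rw [hx]
        apply if_neg
        intro hPτ
        obtain ⟨e, he, hval⟩ :=
          hneigh τ σ hPτ (H.adj_symm ((H.mem_neighborFinset _ _).mp hτ))
        obtain ⟨τ', hτ'val, hPτ', -, -⟩ := hswap τ e he hPτ
        have : σ = τ' := Subtype.ext (hval.trans hτ'val.symm)
        exact hP (this ▸ hPτ')
      rw [hxσ, hsum0]
      ring
  -- a nonzero coordinate: the transversal consisting of first endpoints
  have huinj : Set.InjOn u S := by
    intro e₁ h₁ e₂ h₂ h
    exact hsame e₁ (hSsub h₁) e₂ (hSsub h₂) (u e₁) (hmemu e₁) (h ▸ hmemu e₂)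
  have hσ₀card : (S.image u).card = k := by
    rw [Finset.card_image_of_injOn huinj, hScard]
  set σ₀ : {s : Finset V // s.card = k} := ⟨S.image u, hσ₀card⟩ with hσ₀
  have hPσ₀ : Pp σ₀ := by
    constructor
    · intro a ha
      obtain ⟨e, he, rfl⟩ := Finset.mem_image.mp ha
      exact ⟨e, he, hmemu e⟩
    · intro e he
      have h1 : u e ∈ σ₀.val := Finset.mem_image.mpr ⟨e, he, rfl⟩
      have h2 : w e ∉ σ₀.val := by
        intro hw'
        obtain ⟨e', he', hwe⟩ := Finset.mem_image.mp hw'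
        have : e' = e := hsame e' (hSsub he') e (hSsub he) (u e') (hmemu e') (hwe ▸ hmemw e)
        exact hSne e he (this ▸ hwe)
      exact iff_of_true h1 h2
  have hx0 : x ≠ 0 := by
    intro h
    have h1 : x σ₀ = 1 := by
      show (if Pp σ₀ then sgn σ₀ else 0) = 1
      rw [if_pos hPσ₀]
      apply Finset.prod_eq_one
      intro e he
      rw [if_pos (Finset.mem_image.mpr ⟨e, he, rfl⟩)]
    rw [h] at h1
    simp at h1
  -- conclusion
  have hmem2k : (2 * (k : ℝ)) ∈
      {μ : ℝ | ∃ y : {s : Finset V // s.card = k} → ℝ,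
        y ≠ 0 ∧ (H.lapMatrix ℝ).mulVec y = μ • y} := ⟨x, hx0, heig⟩
  show sSup _ = 2 * (k : ℝ)
  apply le_antisymm
  · exact csSup_le ⟨_, hmem2k⟩ fun μ hμ => hub μ hμ
  · exact le_csSup ⟨2 * (k : ℝ), fun μ hμ => hub μ hμ⟩ hmem2k
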